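/- arXiv:2212.05955 — 4 statements merged into one kernel-verified Lean document; each statement's English description precedes it below -/
import Mathlib

section
/- For every positive integer t and every θ in the support Θ of the target distribution Π, the t-step accept-reject-based Markov kernel satisfies the total variation lower bound ‖P^t(θ,·) − Π‖_TV ≥ (1 − A(θ))^t, where A(θ) is the acceptance probability at θ. -/
open MeasureTheory

variable {Ω : Type*} [MeasurableSpace Ω]

/-- The acceptance probability `A(θ) = ∫ a(θ,θ') q(θ,θ') dλ(θ')`. -/
noncomputable def acceptProb (lam : Measure Ω) (a q : Ω → Ω → ℝ) (θ : Ω) : ℝ :=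
  ∫ θ', a θ θ' * q θ θ' ∂lam

/-- The accept-reject-based Markov kernel
`P(θ,B) = ∫_B a(θ,θ') q(θ,θ') dλ(θ') + δ_θ(B) (1 − A(θ))`. -/
noncomputable def arbKernel (lam : Measure Ω) (a q : Ω → Ω → ℝ) (θ : Ω) : Measure Ω :=
  lam.withDensity (fun θ' => ENNReal.ofReal (a θ θ' * q θ θ')) +
    (ENNReal.ofReal (1 - acceptProb lam a q θ)) • Measure.dirac θ

/-- The `t`-step iterate `P^t(θ,·)` of a Markov kernel, with `P^0(θ,·) = δ_θ`. -/
noncomputable def iterK (P : Ω → Measure Ω) : ℕ → Ω → Measure Ω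
  | 0 => fun θ => Measure.dirac θ
  | (t + 1) => fun θ => (iterK P t θ).bind P

/-- Total variation distance:
`‖μ − ν‖_TV = sup { ∫ f dμ − ∫ f dν : f measurable, 0 ≤ f ≤ 1 }`. -/
noncomputable def tvDist (μ ν : Measure Ω) : ℝ :=
  ⨆ f : {f : Ω → ℝ // Measurable f ∧ ∀ x, f x ∈ Set.Icc (0:ℝ) 1},
    (∫ x, f.1 x ∂μ - ∫ x, f.1 x ∂ν)

/-- Theorem 1: for every `t ∈ ℤ₊` and every `θ ∈ Θ`,
`‖P^t(θ,·) − Π‖_TV ≥ (1 − A(θ))^t`. -/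
theorem arb_tv_lower_bound
    (lam : Measure Ω) [SigmaFinite lam]
    (Pi : Measure Ω) [IsProbabilityMeasure Pi]
    (Θ : Set Ω) (hΘne : Θ.Nonempty) (hΘmeas : MeasurableSet Θ)
    (pi : Ω → ℝ) (hpim : Measurable pi)
    (hdens : Pi = lam.withDensity (fun x => ENNReal.ofReal (pi x)))
    (hpos : ∀ θ ∈ Θ, 0 < pi θ) (hzero : ∀ θ ∉ Θ, pi θ = 0)
    (hsing : ∀ θ ∈ Θ, MeasurableSet {θ} ∧ lam {θ} = 0)
    (a q : Ω → Ω → ℝ)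
    (ham : Measurable (Function.uncurry a)) (hqm : Measurable (Function.uncurry q))
    (ha01 : ∀ θ θ', a θ θ' ∈ Set.Icc (0:ℝ) 1)
    (hq0 : ∀ θ θ', 0 ≤ q θ θ') (hq1 : ∀ θ, ∫ θ', q θ θ' ∂lam = 1)
    (hinv : Pi.bind (arbKernel lam a q) = Pi)
    (t : ℕ) (ht : 1 ≤ t) (θ : Ω) (hθ : θ ∈ Θ) :
    (1 - acceptProb lam a q θ) ^ t ≤ tvDist (iterK (arbKernel lam a q) t θ) Pi := by
  obtain ⟨hθmeas, hθzero⟩ := hsing θ hθ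
  set A : Ω → ℝ := acceptProb lam a q with hA
  set P : Ω → Measure Ω := arbKernel lam a q with hP
  -- integrability of q x ·
  have hqxm : ∀ x, Measurable (fun y => q x y) := fun x =>
    hqm.comp (measurable_prodMk_left)
  have haqm : ∀ x, Measurable (fun y => a x y * q x y) := fun x =>
    (ham.comp measurable_prodMk_left).mul (hqm.comp measurable_prodMk_left)
  have hqint : ∀ x, Integrable (fun y => q x y) lam := by
    intro x
    by_contra h
    have h0 := integral_undef h
    rw [hq1 x] at h0
    exact one_ne_zero h0
  have haqint : ∀ x, Integrable (fun y => a x y * q x y) lam := by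
    intro x
    refine (hqint x).mono' ((haqm x).aestronglyMeasurable) ?_
    filter_upwards with y
    have h1 := ha01 x y
    have h2 := hq0 x y
    rw [Real.norm_eq_abs, abs_of_nonneg (mul_nonneg h1.1 h2)]
    nlinarith [h1.1, h1.2]
  have haqnn : ∀ x y, 0 ≤ a x y * q x y := fun x y =>
    mul_nonneg (ha01 x y).1 (hq0 x y)
  -- A ∈ [0,1]
  have hA0 : ∀ x, 0 ≤ A x := fun x =>
    integral_nonneg (fun y => haqnn x y)
  have hA1 : ∀ x, A x ≤ 1 := by
    intro x
    rw [hA, acceptProb, ← hq1 x]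
    refine integral_mono (haqint x) (hqint x) ?_
    intro y
    show a x y * q x y ≤ q x y
    have h1 := ha01 x y
    have h2 := hq0 x y
    nlinarith [h1.2]
  -- measurability of A
  have hAmeas : Measurable A := by
    have : StronglyMeasurable (Function.uncurry a * Function.uncurry q) :=
      (ham.mul hqm).stronglyMeasurable
    exact this.integral_prod_right'.measurable
  -- measurability of the kernel
  have hPmeas : Measurable P := by
    refine Measure.measurable_of_measurable_coe _ (fun s hs => ?_)
    have hcoe : (fun x => P x s) =
        fun x => (∫⁻ y in s, ENNReal.ofReal (a x y * q x y) ∂lam) +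
          ENNReal.ofReal (1 - A x) * Measure.dirac x s := by
      funext x
      rw [hP, arbKernel, Measure.add_apply, Measure.smul_apply, smul_eq_mul,
        withDensity_apply _ hs]
    rw [hcoe]
    refine Measurable.add ?_ (Measurable.mul (Measurable.ennreal_ofReal
      (measurable_const.sub hAmeas)) ((Measure.measurable_coe hs).comp
        Measure.measurable_dirac))
    have : Measurable (fun p : Ω × Ω => ENNReal.ofReal (a p.1 p.2 * q p.1 p.2)) :=
      (ham.mul hqm).ennreal_ofReal
    exact Measurable.lintegral_prod_right' (ν := lam.restrict s) this
  -- each P x is a probability measure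
  have hPuniv : ∀ x, P x Set.univ = 1 := by
    intro x
    rw [hP, arbKernel, Measure.add_apply, Measure.smul_apply, smul_eq_mul,
      withDensity_apply _ MeasurableSet.univ, Measure.restrict_univ,
      Measure.dirac_apply_of_mem (Set.mem_univ x), mul_one,
      ← ofReal_integral_eq_lintegral_ofReal (haqint x)
        (Filter.Eventually.of_forall (haqnn x)), ← hA,
      show (∫ y, a x y * q x y ∂lam) = A x from rfl,
      ← ENNReal.ofReal_add (hA0 x) (by linarith [hA1 x]),
      show (A x) + (1 - A x) = 1 by ring, ENNReal.ofReal_one]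
  -- P x {θ} formula
  have hPsing : ∀ x, P x {θ} = ENNReal.ofReal (1 - A x) * ({θ} : Set Ω).indicator 1 x := by
    intro x
    rw [hP, arbKernel, Measure.add_apply, Measure.smul_apply, smul_eq_mul,
      withDensity_apply _ hθmeas, Measure.restrict_eq_zero.mpr hθzero,
      lintegral_zero_measure, zero_add, Measure.dirac_apply' _ hθmeas, ← hA]
  -- iterates at {θ}
  have hiter : ∀ n, iterK P n θ {θ} = (ENNReal.ofReal (1 - A θ)) ^ n := by
    intro n
    induction n with
    | zero => simp [iterK, Measure.dirac_apply_of_mem (Set.mem_singleton θ)]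
    | succ n ih =>
      rw [iterK, Measure.bind_apply hθmeas hPmeas.aemeasurable]
      have : (fun x => P x {θ}) =
          ({θ} : Set Ω).indicator (fun _ => ENNReal.ofReal (1 - A θ)) := by
        funext x
        rw [hPsing x]
        by_cases hx : x ∈ ({θ} : Set Ω)
        · have : x = θ := hx
          subst this
          simp [Set.indicator_of_mem hx]
        · simp [Set.indicator_of_notMem hx]
      rw [this, lintegral_indicator_const hθmeas, ih, pow_succ, mul_comm]
  -- iterates are probability measures
  have hiterudef : ∀ n, iterK P n θ Set.univ = 1 := by
    intro n
    induction n with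
    | zero => simp [iterK]
    | succ n ih =>
      rw [iterK, Measure.bind_apply MeasurableSet.univ hPmeas.aemeasurable]
      simp only [hPuniv]
      rw [lintegral_one, ih]
  -- Π {θ} = 0
  have hPizero : Pi {θ} = 0 := by
    rw [hdens, withDensity_apply _ hθmeas, Measure.restrict_eq_zero.mpr hθzero,
      lintegral_zero_measure]
  -- the test function
  set μ : Measure Ω := iterK P t θ with hμ
  have hμfin : IsProbabilityMeasure μ := ⟨hiterudef t⟩
  set f : Ω → ℝ := ({θ} : Set Ω).indicator (fun _ => (1:ℝ)) with hf
  have hfmeas : Measurable f := (measurable_const.indicator hθmeas)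
  have hf01 : ∀ x, f x ∈ Set.Icc (0:ℝ) 1 := by
    intro x
    by_cases hx : x ∈ ({θ} : Set Ω) <;>
      simp [hf, Set.indicator_of_mem, Set.indicator_of_notMem, hx]
  -- value of the sup candidate
  have hval : (∫ x, f x ∂μ) - (∫ x, f x ∂Pi) = (1 - A θ) ^ t := by
    rw [hf, integral_indicator_const (1:ℝ) hθmeas, integral_indicator_const (1:ℝ) hθmeas,
      measureReal_def, measureReal_def, hPizero, hμ, hiter t]
    have h1A : (0:ℝ) ≤ 1 - A θ := by linarith [hA1 θ]
    rw [← ENNReal.ofReal_pow h1A, ENNReal.toReal_ofReal (pow_nonneg h1A t)]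
    simp
  -- bounded above
  have hbdd : BddAbove (Set.range fun g : {g : Ω → ℝ // Measurable g ∧
      ∀ x, g x ∈ Set.Icc (0:ℝ) 1} => (∫ x, g.1 x ∂μ - ∫ x, g.1 x ∂Pi)) := by
    refine ⟨1, ?_⟩
    rintro r ⟨⟨g, hgm, hg01⟩, rfl⟩
    have hgint : Integrable g μ := by
      refine (integrable_const (1:ℝ)).mono' hgm.aestronglyMeasurable ?_
      filter_upwards with x
      rw [Real.norm_eq_abs, abs_of_nonneg (hg01 x).1]
      exact (hg01 x).2
    have h1 : ∫ x, g x ∂μ ≤ ∫ x, (1:ℝ) ∂μ :=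
      integral_mono hgint (integrable_const 1) (fun x => (hg01 x).2)
    have h2 : (0:ℝ) ≤ ∫ x, g x ∂Pi := integral_nonneg (fun x => (hg01 x).1)
    simp only [integral_const, measureReal_def, measure_univ, ENNReal.toReal_one, smul_eq_mul,
      one_mul, mul_one] at h1
    simp only
    linarith
  calc (1 - A θ) ^ t = ∫ x, f x ∂μ - ∫ x, f x ∂Pi := hval.symm
    _ ≤ tvDist μ Pi := le_ciSup hbdd ⟨f, hfmeas, hf01⟩
end

section
/- Let P₁ and P₂ be two accept-reject-based Markov kernels with the same proposal density q and acceptance functions a₁ and a₂ respectively, both having Π as invariant distribution. If a₁(θ,θ') ≥ a₂(θ,θ') for all θ, θ', then for every t ∈ ℤ₊ and every θ ∈ Θ, ‖P₂^t(θ,·) − Π‖_TV ≥ (1 − A₂(θ))^t ≥ (1 − A₁(θ))^t, where A_i(θ) = ∫ a_i(θ,θ') q(θ,θ') dλ(θ'). -/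
open MeasureTheory

variable {Ω : Type*} [MeasurableSpace Ω]

section Aux

variable {lam : Measure Ω} {a q : Ω → Ω → ℝ}

lemma aux_integrable_q (hq1 : ∀ θ, ∫ θ', q θ θ' ∂lam = 1) (θ : Ω) :
    Integrable (q θ) lam := by
  by_contra h
  have := hq1 θ
  rw [integral_undef h] at this
  norm_num at this

lemma aux_meas_slice (ham : Measurable (Function.uncurry a)) (θ : Ω) :
    Measurable (a θ) :=
  ham.comp (measurable_const.prodMk measurable_id)

lemma aux_integrable_aq (ham : Measurable (Function.uncurry a))
    (hqm : Measurable (Function.uncurry q))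
    (ha01 : ∀ θ θ', a θ θ' ∈ Set.Icc (0:ℝ) 1) (hq0 : ∀ θ θ', 0 ≤ q θ θ')
    (hq1 : ∀ θ, ∫ θ', q θ θ' ∂lam = 1) (θ : Ω) :
    Integrable (fun θ' => a θ θ' * q θ θ') lam := by
  refine Integrable.mono (aux_integrable_q hq1 θ)
    (((aux_meas_slice ham θ).mul (aux_meas_slice hqm θ)).aestronglyMeasurable) ?_
  refine Filter.Eventually.of_forall fun x => ?_
  rw [Real.norm_eq_abs, Real.norm_eq_abs,
    abs_of_nonneg (mul_nonneg (ha01 θ x).1 (hq0 θ x)), abs_of_nonneg (hq0 θ x)]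
  exact mul_le_of_le_one_left (hq0 θ x) (ha01 θ x).2

lemma aux_acceptProb_nonneg (ha01 : ∀ θ θ', a θ θ' ∈ Set.Icc (0:ℝ) 1)
    (hq0 : ∀ θ θ', 0 ≤ q θ θ') (θ : Ω) : 0 ≤ acceptProb lam a q θ :=
  integral_nonneg fun x => mul_nonneg (ha01 θ x).1 (hq0 θ x)

lemma aux_acceptProb_le_one (ham : Measurable (Function.uncurry a))
    (hqm : Measurable (Function.uncurry q))
    (ha01 : ∀ θ θ', a θ θ' ∈ Set.Icc (0:ℝ) 1) (hq0 : ∀ θ θ', 0 ≤ q θ θ')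
    (hq1 : ∀ θ, ∫ θ', q θ θ' ∂lam = 1) (θ : Ω) : acceptProb lam a q θ ≤ 1 := by
  calc acceptProb lam a q θ ≤ ∫ θ', q θ θ' ∂lam := by
        refine integral_mono (aux_integrable_aq ham hqm ha01 hq0 hq1 θ)
          (aux_integrable_q hq1 θ) fun x => ?_
        exact mul_le_of_le_one_left (hq0 θ x) (ha01 θ x).2
    _ = 1 := hq1 θ

lemma aux_arbKernel_univ (ham : Measurable (Function.uncurry a))
    (hqm : Measurable (Function.uncurry q))
    (ha01 : ∀ θ θ', a θ θ' ∈ Set.Icc (0:ℝ) 1) (hq0 : ∀ θ θ', 0 ≤ q θ θ')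
    (hq1 : ∀ θ, ∫ θ', q θ θ' ∂lam = 1) (θ : Ω) :
    arbKernel lam a q θ Set.univ = 1 := by
  have hA0 := aux_acceptProb_nonneg (lam := lam) ha01 hq0 θ
  have hA1 := aux_acceptProb_le_one ham hqm ha01 hq0 hq1 θ
  have hint : ∫⁻ θ', ENNReal.ofReal (a θ θ' * q θ θ') ∂lam
      = ENNReal.ofReal (acceptProb lam a q θ) := by
    rw [acceptProb, ofReal_integral_eq_lintegral_ofReal
      (aux_integrable_aq ham hqm ha01 hq0 hq1 θ)
      (Filter.Eventually.of_forall fun x => mul_nonneg (ha01 θ x).1 (hq0 θ x))]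
  simp only [arbKernel, Measure.add_apply, Measure.smul_apply, smul_eq_mul,
    withDensity_apply _ MeasurableSet.univ, Measure.restrict_univ,
    Measure.dirac_apply_of_mem (Set.mem_univ θ), mul_one, hint]
  rw [← ENNReal.ofReal_add hA0 (by linarith)]
  norm_num

lemma aux_measurable_arbKernel [SigmaFinite lam] (ham : Measurable (Function.uncurry a))
    (hqm : Measurable (Function.uncurry q)) :
    Measurable (arbKernel lam a q) := by
  apply Measure.measurable_of_measurable_coe
  intro s hs
  simp only [arbKernel, Measure.add_apply, Measure.smul_apply, smul_eq_mul,
    withDensity_apply _ hs, Measure.dirac_apply' _ hs]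
  apply Measurable.add
  · have hm : Measurable (fun p : Ω × Ω => ENNReal.ofReal (a p.1 p.2 * q p.1 p.2)) :=
      ENNReal.measurable_ofReal.comp (ham.mul hqm)
    have : ∀ θ, ∫⁻ x in s, ENNReal.ofReal (a θ x * q θ x) ∂lam
        = ∫⁻ x, s.indicator (fun x => ENNReal.ofReal (a θ x * q θ x)) x ∂lam := by
      intro θ; rw [lintegral_indicator hs]
    simp only [this]
    apply Measurable.lintegral_prod_right'
      (f := fun p : Ω × Ω => s.indicator (fun x => ENNReal.ofReal (a p.1 x * q p.1 x)) p.2)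
    exact hm.indicator (measurable_snd hs)
  · apply Measurable.mul
    · apply ENNReal.measurable_ofReal.comp
      exact measurable_const.sub
        ((ham.mul hqm).stronglyMeasurable.integral_prod_right'.measurable)
    · exact measurable_one.indicator hs

lemma aux_iterK_univ [SigmaFinite lam] (ham : Measurable (Function.uncurry a))
    (hqm : Measurable (Function.uncurry q))
    (ha01 : ∀ θ θ', a θ θ' ∈ Set.Icc (0:ℝ) 1) (hq0 : ∀ θ θ', 0 ≤ q θ θ')
    (hq1 : ∀ θ, ∫ θ', q θ θ' ∂lam = 1) (θ : Ω) (t : ℕ) :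
    iterK (arbKernel lam a q) t θ Set.univ = 1 := by
  induction t with
  | zero => simp [iterK]
  | succ t ih =>
    rw [iterK, Measure.bind_apply MeasurableSet.univ
      (aux_measurable_arbKernel ham hqm).aemeasurable]
    simp only [aux_arbKernel_univ ham hqm ha01 hq0 hq1]
    rw [lintegral_const, one_mul, ih]

lemma aux_iterK_singleton [SigmaFinite lam] (ham : Measurable (Function.uncurry a))
    (hqm : Measurable (Function.uncurry q))
    (ha01 : ∀ θ θ', a θ θ' ∈ Set.Icc (0:ℝ) 1) (hq0 : ∀ θ θ', 0 ≤ q θ θ')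
    (hq1 : ∀ θ, ∫ θ', q θ θ' ∂lam = 1) (θ : Ω)
    (hms : MeasurableSet ({θ} : Set Ω)) (hl0 : lam ({θ} : Set Ω) = 0) (t : ℕ) :
    ENNReal.ofReal ((1 - acceptProb lam a q θ) ^ t)
      ≤ iterK (arbKernel lam a q) t θ ({θ} : Set Ω) := by
  have hA1 := aux_acceptProb_le_one ham hqm ha01 hq0 hq1 θ
  have h01 : (0:ℝ) ≤ 1 - acceptProb lam a q θ := by linarith
  have hPθ : arbKernel lam a q θ ({θ} : Set Ω)
      = ENNReal.ofReal (1 - acceptProb lam a q θ) := by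
    simp only [arbKernel, Measure.add_apply, Measure.smul_apply, smul_eq_mul,
      withDensity_apply _ hms, Measure.dirac_apply_of_mem (Set.mem_singleton θ), mul_one]
    rw [Measure.restrict_eq_zero.mpr hl0, lintegral_zero_measure, zero_add]
  induction t with
  | zero => simp [iterK, Measure.dirac_apply_of_mem (Set.mem_singleton θ)]
  | succ t ih =>
    rw [iterK, Measure.bind_apply hms (aux_measurable_arbKernel ham hqm).aemeasurable]
    calc ENNReal.ofReal ((1 - acceptProb lam a q θ) ^ (t + 1))
        = ENNReal.ofReal (1 - acceptProb lam a q θ)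
            * ENNReal.ofReal ((1 - acceptProb lam a q θ) ^ t) := by
          rw [← ENNReal.ofReal_mul h01, pow_succ, mul_comm]
      _ ≤ ENNReal.ofReal (1 - acceptProb lam a q θ)
            * iterK (arbKernel lam a q) t θ ({θ} : Set Ω) :=
          mul_le_mul_right ih _
      _ = ∫⁻ x in ({θ} : Set Ω), arbKernel lam a q x ({θ} : Set Ω)
            ∂(iterK (arbKernel lam a q) t θ) := by
          have hcg : ∫⁻ x in ({θ} : Set Ω), arbKernel lam a q x ({θ} : Set Ω)
              ∂(iterK (arbKernel lam a q) t θ)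
              = ∫⁻ _x in ({θ} : Set Ω), ENNReal.ofReal (1 - acceptProb lam a q θ)
                ∂(iterK (arbKernel lam a q) t θ) := by
            refine setLIntegral_congr_fun hms
              (fun x hx => ?_)
            rw [Set.mem_singleton_iff] at hx
            rw [hx, hPθ]
          rw [hcg, setLIntegral_const]
      _ ≤ ∫⁻ x, arbKernel lam a q x ({θ} : Set Ω) ∂(iterK (arbKernel lam a q) t θ) :=
          setLIntegral_le_lintegral _ _

end Aux

/-- Corollary 1: if `a₁ ≥ a₂` pointwise, then for every `t ∈ ℤ₊` and `θ ∈ Θ`,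
`‖P₂^t(θ,·) − Π‖_TV ≥ (1 − A₂(θ))^t ≥ (1 − A₁(θ))^t`. -/
theorem arb_tv_lower_bound_compare
    (lam : Measure Ω) [SigmaFinite lam]
    (Pi : Measure Ω) [IsProbabilityMeasure Pi]
    (Θ : Set Ω) (hΘne : Θ.Nonempty) (hΘmeas : MeasurableSet Θ)
    (pi : Ω → ℝ) (hpim : Measurable pi)
    (hdens : Pi = lam.withDensity (fun x => ENNReal.ofReal (pi x)))
    (hpos : ∀ θ ∈ Θ, 0 < pi θ) (hzero : ∀ θ ∉ Θ, pi θ = 0)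
    (hsing : ∀ θ ∈ Θ, MeasurableSet {θ} ∧ lam {θ} = 0)
    (a₁ a₂ q : Ω → Ω → ℝ)
    (ha₁m : Measurable (Function.uncurry a₁)) (ha₂m : Measurable (Function.uncurry a₂))
    (hqm : Measurable (Function.uncurry q))
    (ha₁01 : ∀ θ θ', a₁ θ θ' ∈ Set.Icc (0:ℝ) 1)
    (ha₂01 : ∀ θ θ', a₂ θ θ' ∈ Set.Icc (0:ℝ) 1)
    (hq0 : ∀ θ θ', 0 ≤ q θ θ') (hq1 : ∀ θ, ∫ θ', q θ θ' ∂lam = 1)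
    (hinv₁ : Pi.bind (arbKernel lam a₁ q) = Pi)
    (hinv₂ : Pi.bind (arbKernel lam a₂ q) = Pi)
    (hcomp : ∀ θ θ', a₂ θ θ' ≤ a₁ θ θ')
    (t : ℕ) (ht : 1 ≤ t) (θ : Ω) (hθ : θ ∈ Θ) :
    (1 - acceptProb lam a₁ q θ) ^ t ≤ (1 - acceptProb lam a₂ q θ) ^ t ∧
      (1 - acceptProb lam a₂ q θ) ^ t ≤ tvDist (iterK (arbKernel lam a₂ q) t θ) Pi := by
  obtain ⟨hms, hl0⟩ := hsing θ hθ
  have hA₁le := aux_acceptProb_le_one ha₁m hqm ha₁01 hq0 hq1 θ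
  have hA₂le := aux_acceptProb_le_one ha₂m hqm ha₂01 hq0 hq1 θ
  have hA₂0 := aux_acceptProb_nonneg (lam := lam) ha₂01 hq0 θ
  have hcompA : acceptProb lam a₂ q θ ≤ acceptProb lam a₁ q θ := by
    refine integral_mono (aux_integrable_aq ha₂m hqm ha₂01 hq0 hq1 θ)
      (aux_integrable_aq ha₁m hqm ha₁01 hq0 hq1 θ) fun x => ?_
    exact mul_le_mul_of_nonneg_right (hcomp θ x) (hq0 θ x)
  constructor
  · exact pow_le_pow_left₀ (by linarith) (by linarith) t
  · set μ := iterK (arbKernel lam a₂ q) t θ with hμ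
    have hμuniv : μ Set.univ = 1 := aux_iterK_univ ha₂m hqm ha₂01 hq0 hq1 θ t
    haveI : IsProbabilityMeasure μ := ⟨hμuniv⟩
    have hμfin : μ ({θ} : Set Ω) ≠ ⊤ := by
      refine ne_of_lt (lt_of_le_of_lt (measure_mono (Set.subset_univ _)) ?_)
      rw [hμuniv]; exact ENNReal.one_lt_top
    have hkey := aux_iterK_singleton ha₂m hqm ha₂01 hq0 hq1 θ hms hl0 t
    have hPiTheta : Pi ({θ} : Set Ω) = 0 := by
      rw [hdens, withDensity_apply _ hms, Measure.restrict_eq_zero.mpr hl0,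
        lintegral_zero_measure]
    -- the test function
    set f : Ω → ℝ := Set.indicator ({θ} : Set Ω) (fun _ => 1) with hf
    have hfm : Measurable f := measurable_one.indicator hms
    have hf01 : ∀ x, f x ∈ Set.Icc (0:ℝ) 1 := by
      intro x
      by_cases hx : x ∈ ({θ} : Set Ω) <;>
        simp [hf, Set.indicator_of_mem, Set.indicator_of_notMem, hx]
    have hμint : ∫ x, f x ∂μ = (μ ({θ} : Set Ω)).toReal := by
      rw [hf, integral_indicator_const (1:ℝ) hms, smul_eq_mul, mul_one, measureReal_def]
    have hPiInt : ∫ x, f x ∂Pi = 0 := by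
      rw [hf, integral_indicator_const (1:ℝ) hms, measureReal_def, hPiTheta]; simp
    have hbdd : BddAbove (Set.range fun g :
        {g : Ω → ℝ // Measurable g ∧ ∀ x, g x ∈ Set.Icc (0:ℝ) 1} =>
        (∫ x, g.1 x ∂μ - ∫ x, g.1 x ∂Pi)) := by
      refine ⟨1, ?_⟩
      rintro r ⟨g, rfl⟩
      have hgint : Integrable g.1 μ := by
        refine Integrable.mono' (integrable_const 1)
          g.2.1.aestronglyMeasurable (Filter.Eventually.of_forall fun x => ?_)
        rw [Real.norm_eq_abs, abs_of_nonneg (g.2.2 x).1]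
        exact (g.2.2 x).2
      have h1 : ∫ x, g.1 x ∂μ ≤ 1 := by
        calc ∫ x, g.1 x ∂μ ≤ ∫ _x, (1:ℝ) ∂μ :=
              integral_mono hgint (integrable_const 1) fun x => (g.2.2 x).2
          _ = 1 := by rw [integral_const, measureReal_def, hμuniv]; simp
      have h2 : 0 ≤ ∫ x, g.1 x ∂Pi := integral_nonneg fun x => (g.2.2 x).1
      simp only
      linarith
    have hgoal : (1 - acceptProb lam a₂ q θ) ^ t ≤ ∫ x, f x ∂μ - ∫ x, f x ∂Pi := by
      rw [hμint, hPiInt, sub_zero]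
      have := ENNReal.toReal_mono hμfin hkey
      rwa [ENNReal.toReal_ofReal (pow_nonneg (by linarith) t)] at this
    exact le_ciSup_of_le hbdd ⟨f, hfm, hf01⟩ hgoal
end

section
/- If an accept-reject-based Markov kernel P is (ρ, M)-geometrically ergodic, then ρ ≥ 1 − inf_{θ∈Θ} A(θ), where A(θ) is the acceptance probability at θ. -/
open MeasureTheory

variable {Ω : Type*} [MeasurableSpace Ω]

/-- Theorem 2: if the ARB kernel `P` is `(ρ, M)`-geometrically ergodic, then
`ρ ≥ 1 − inf_{θ ∈ Θ} A(θ)`. -/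
theorem arb_geometric_rate_lower_bound
    (lam : Measure Ω) [SigmaFinite lam]
    (Pi : Measure Ω) [IsProbabilityMeasure Pi]
    (Θ : Set Ω) (hΘne : Θ.Nonempty) (hΘmeas : MeasurableSet Θ)
    (pi : Ω → ℝ) (hpim : Measurable pi)
    (hdens : Pi = lam.withDensity (fun x => ENNReal.ofReal (pi x)))
    (hpos : ∀ θ ∈ Θ, 0 < pi θ) (hzero : ∀ θ ∉ Θ, pi θ = 0)
    (hsing : ∀ θ ∈ Θ, MeasurableSet {θ} ∧ lam {θ} = 0)
    (a q : Ω → Ω → ℝ)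
    (ham : Measurable (Function.uncurry a)) (hqm : Measurable (Function.uncurry q))
    (ha01 : ∀ θ θ', a θ θ' ∈ Set.Icc (0:ℝ) 1)
    (hq0 : ∀ θ θ', 0 ≤ q θ θ') (hq1 : ∀ θ, ∫ θ', q θ θ' ∂lam = 1)
    (hinv : Pi.bind (arbKernel lam a q) = Pi)
    (ρ : ℝ) (hρ : ρ ∈ Set.Ioo (0:ℝ) 1)
    (Mf : Ω → ℝ) (hM : ∀ θ ∈ Θ, 0 < Mf θ)
    (hge : ∀ θ ∈ Θ, ∀ t : ℕ, 1 ≤ t →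
      tvDist (iterK (arbKernel lam a q) t θ) Pi ≤ Mf θ * ρ ^ t) :
    1 - ⨅ θ : Θ, acceptProb lam a q θ ≤ ρ := by
  obtain ⟨hρ0, hρ1⟩ := hρ
  -- measurability / integrability facts
  have haq_meas : ∀ θ, Measurable (fun θ' => a θ θ' * q θ θ') := fun θ =>
    (ham.comp measurable_prodMk_left).mul (hqm.comp measurable_prodMk_left)
  have hq_int : ∀ θ, Integrable (q θ) lam := by
    intro θ
    by_contra h
    have h1 := hq1 θ
    rw [integral_undef h] at h1
    exact one_ne_zero h1.symm
  have haq_nonneg : ∀ θ θ', 0 ≤ a θ θ' * q θ θ' := fun θ θ' =>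
    mul_nonneg (ha01 θ θ').1 (hq0 θ θ')
  have haq_int : ∀ θ, Integrable (fun θ' => a θ θ' * q θ θ') lam := by
    intro θ
    refine (hq_int θ).mono' (haq_meas θ).aestronglyMeasurable ?_
    filter_upwards with θ'
    rw [Real.norm_eq_abs, abs_of_nonneg (haq_nonneg θ θ')]
    exact mul_le_of_le_one_left (hq0 θ θ') (ha01 θ θ').2
  have hA0 : ∀ θ, 0 ≤ acceptProb lam a q θ := fun θ =>
    integral_nonneg (haq_nonneg θ)
  have hA1 : ∀ θ, acceptProb lam a q θ ≤ 1 := by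
    intro θ
    rw [← hq1 θ]
    exact integral_mono (haq_int θ) (hq_int θ) (fun θ' =>
      mul_le_of_le_one_left (hq0 θ θ') (ha01 θ θ').2)
  have hAmeas : Measurable (acceptProb lam a q) := by
    have : StronglyMeasurable fun p : Ω × Ω => a p.1 p.2 * q p.1 p.2 :=
      (ham.mul hqm).stronglyMeasurable
    exact this.integral_prod_right'.measurable
  -- the kernel is a probability measure
  have hPuniv : ∀ θ, arbKernel lam a q θ Set.univ = 1 := by
    intro θ
    have hlint : ∫⁻ θ', ENNReal.ofReal (a θ θ' * q θ θ') ∂lam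
        = ENNReal.ofReal (acceptProb lam a q θ) := by
      rw [acceptProb, ofReal_integral_eq_lintegral_ofReal (haq_int θ)
        (Filter.Eventually.of_forall (haq_nonneg θ))]
    rw [arbKernel, Measure.add_apply, Measure.smul_apply,
      withDensity_apply _ MeasurableSet.univ, Measure.restrict_univ, hlint,
      Measure.dirac_apply_of_mem (Set.mem_univ θ), smul_eq_mul, mul_one,
      ← ENNReal.ofReal_add (hA0 θ) (by linarith [hA1 θ])]
    norm_num
  have hPprob : ∀ θ, IsProbabilityMeasure (arbKernel lam a q θ) :=
    fun θ => ⟨hPuniv θ⟩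
  -- measurability of the kernel
  have hKmeas : Measurable (arbKernel lam a q) := by
    refine Measure.measurable_of_measurable_coe _ (fun s hs => ?_)
    have h1 : Measurable fun θ =>
        ∫⁻ x in s, ENNReal.ofReal (a θ x * q θ x) ∂lam := by
      classical
      have hF : Measurable fun p : Ω × Ω =>
          (if p.2 ∈ s then ENNReal.ofReal (a p.1 p.2 * q p.1 p.2) else 0) := by
        refine Measurable.ite (measurable_snd hs) ?_ measurable_const
        exact ENNReal.measurable_ofReal.comp (ham.mul hqm)
      have := Measurable.lintegral_prod_right' (ν := lam) hF
      have heq : (fun θ => ∫⁻ x in s, ENNReal.ofReal (a θ x * q θ x) ∂lam)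
          = fun θ => ∫⁻ x, (if x ∈ s then ENNReal.ofReal (a θ x * q θ x) else 0) ∂lam := by
        funext θ
        rw [← lintegral_indicator hs]
        simp only [Set.indicator_apply]
      rw [heq]
      exact this
    have h2 : Measurable fun θ =>
        ENNReal.ofReal (1 - acceptProb lam a q θ) * Measure.dirac θ s := by
      have : (fun θ => Measure.dirac θ s) = fun θ => s.indicator 1 θ := by
        ext θ; exact Measure.dirac_apply' θ hs
      exact (ENNReal.measurable_ofReal.comp (measurable_const.sub hAmeas)).mul
        (this ▸ (measurable_one.indicator hs))
    have : (fun θ => arbKernel lam a q θ s) = fun θ =>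
        (∫⁻ x in s, ENNReal.ofReal (a θ x * q θ x) ∂lam) +
        ENNReal.ofReal (1 - acceptProb lam a q θ) * Measure.dirac θ s := by
      ext θ
      rw [arbKernel, Measure.add_apply, Measure.smul_apply,
        withDensity_apply _ hs, smul_eq_mul]
    rw [this]
    exact h1.add h2
  -- iterates are probability measures
  have hIterProb : ∀ t θ, IsProbabilityMeasure (iterK (arbKernel lam a q) t θ) := by
    intro t
    induction t with
    | zero => intro θ; rw [iterK]; infer_instance
    | succ t ih =>
      intro θ
      constructor
      rw [iterK, Measure.bind_apply MeasurableSet.univ hKmeas.aemeasurable]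
      have : ∀ x, arbKernel lam a q x Set.univ = 1 := hPuniv
      simp only [this, lintegral_one]
      exact (ih θ).measure_univ
  -- lower bound on the mass at θ
  have hlow : ∀ θ ∈ Θ, ∀ t : ℕ,
      (ENNReal.ofReal (1 - acceptProb lam a q θ)) ^ t
        ≤ iterK (arbKernel lam a q) t θ {θ} := by
    intro θ hθ t
    obtain ⟨hθms, _⟩ := hsing θ hθ
    induction t with
    | zero =>
      rw [iterK, pow_zero, Measure.dirac_apply_of_mem (Set.mem_singleton θ)]
    | succ t ih =>
      have hPθ : ENNReal.ofReal (1 - acceptProb lam a q θ)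
          ≤ arbKernel lam a q θ {θ} := by
        rw [arbKernel, Measure.add_apply, Measure.smul_apply, smul_eq_mul,
          Measure.dirac_apply_of_mem (Set.mem_singleton θ), mul_one]
        exact le_add_self
      calc (ENNReal.ofReal (1 - acceptProb lam a q θ)) ^ (t + 1)
          = ENNReal.ofReal (1 - acceptProb lam a q θ) *
            (ENNReal.ofReal (1 - acceptProb lam a q θ)) ^ t := by
            rw [pow_succ, mul_comm]
        _ ≤ arbKernel lam a q θ {θ} * iterK (arbKernel lam a q) t θ {θ} :=
            mul_le_mul' hPθ ih
        _ = ∫⁻ _ in {θ}, arbKernel lam a q θ {θ} ∂(iterK (arbKernel lam a q) t θ) := by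
            rw [setLIntegral_const]
        _ = ∫⁻ x in {θ}, arbKernel lam a q x {θ} ∂(iterK (arbKernel lam a q) t θ) := by
            refine setLIntegral_congr_fun hθms ?_
            intro x hx
            rw [Set.mem_singleton_iff] at hx
            rw [hx]
        _ ≤ ∫⁻ x, arbKernel lam a q x {θ} ∂(iterK (arbKernel lam a q) t θ) :=
            setLIntegral_le_lintegral _ _
        _ = iterK (arbKernel lam a q) (t + 1) θ {θ} := by
            rw [iterK, Measure.bind_apply hθms hKmeas.aemeasurable]
  -- Π has no atoms on Θ
  have hPiθ : ∀ θ ∈ Θ, Pi {θ} = 0 := by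
    intro θ hθ
    obtain ⟨hθms, hθ0⟩ := hsing θ hθ
    rw [hdens, withDensity_apply _ hθms, setLIntegral_measure_zero _ _ hθ0]
  -- tvDist lower bound via the indicator of {θ}
  have htv : ∀ θ ∈ Θ, ∀ t : ℕ,
      ((iterK (arbKernel lam a q) t θ) {θ}).toReal
        ≤ tvDist (iterK (arbKernel lam a q) t θ) Pi := by
    intro θ hθ t
    obtain ⟨hθms, _⟩ := hsing θ hθ
    haveI := hIterProb t θ
    set μ := iterK (arbKernel lam a q) t θ
    have hbdd : BddAbove (Set.range fun f :
        {f : Ω → ℝ // Measurable f ∧ ∀ x, f x ∈ Set.Icc (0:ℝ) 1} =>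
        (∫ x, f.1 x ∂μ - ∫ x, f.1 x ∂Pi)) := by
      refine ⟨1, ?_⟩
      rintro x ⟨⟨f, hfm, hf01⟩, rfl⟩
      have hint : Integrable f μ := by
        refine (integrable_const (1:ℝ)).mono' hfm.aestronglyMeasurable ?_
        filter_upwards with x
        rw [Real.norm_eq_abs, abs_of_nonneg (hf01 x).1]
        exact (hf01 x).2
      have h1 : ∫ x, f x ∂μ ≤ ∫ _, (1:ℝ) ∂μ :=
        integral_mono hint (integrable_const 1) (fun x => (hf01 x).2)
      have h2 : (0:ℝ) ≤ ∫ x, f x ∂Pi := integral_nonneg (fun x => (hf01 x).1)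
      simp only [integral_const, measure_univ, ENNReal.toReal_one, smul_eq_mul,
        one_mul] at h1
      simpa using sub_le_sub h1 h2 |>.trans (by norm_num)
    have := le_ciSup hbdd
      ⟨Set.indicator {θ} 1, measurable_one.indicator hθms,
        fun x => by
          by_cases hx : x ∈ ({θ} : Set Ω) <;>
            simp [Set.indicator_apply, hx, Set.mem_Icc]⟩
    simp only [tvDist]
    refine le_trans ?_ this
    rw [integral_indicator_one hθms, integral_indicator_one hθms, measureReal_def, measureReal_def, hPiθ θ hθ]
    simp
  -- pointwise bound: 1 - A(θ) ≤ ρ for each θ ∈ Θ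
  have hkey : ∀ θ ∈ Θ, 1 - acceptProb lam a q θ ≤ ρ := by
    intro θ hθ
    set c := 1 - acceptProb lam a q θ with hc
    by_cases hc0 : c ≤ 0
    · linarith
    push_neg at hc0
    by_contra hlt
    push_neg at hlt
    have hratio : 1 < c / ρ := (one_lt_div hρ0).mpr hlt
    have htend := tendsto_pow_atTop_atTop_of_one_lt hratio
    obtain ⟨N, hN⟩ := (htend.eventually_gt_atTop (Mf θ)).and
      (Filter.eventually_ge_atTop 1) |>.exists
    obtain ⟨hN1, hN2⟩ := hN
    -- c^N ≤ Mf θ * ρ^N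
    have hcN : c ^ N ≤ Mf θ * ρ ^ N := by
      haveI := hIterProb N θ
      have h1 := hlow θ hθ N
      have h2 := htv θ hθ N
      have h3 := hge θ hθ N hN2
      have h4 : (ENNReal.ofReal c) ^ N = ENNReal.ofReal (c ^ N) := by
        rw [ENNReal.ofReal_pow hc0.le]
      have hfin : (iterK (arbKernel lam a q) N θ) {θ} ≠ ⊤ :=
        (measure_lt_top _ _).ne
      have h5 : c ^ N ≤ ((iterK (arbKernel lam a q) N θ) {θ}).toReal := by
        have := ENNReal.toReal_mono hfin (h4 ▸ h1)
        rwa [ENNReal.toReal_ofReal (pow_nonneg hc0.le N)] at this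
      linarith
    have : (c / ρ) ^ N * ρ ^ N = c ^ N := by
      rw [div_pow, div_mul_cancel₀]
      exact pow_ne_zero N (ne_of_gt hρ0)
    nlinarith [pow_pos hρ0 N, hM θ hθ]
  -- conclude via the infimum
  haveI : Nonempty Θ := hΘne.to_subtype
  have hfinal : 1 - ρ ≤ ⨅ θ : Θ, acceptProb lam a q θ :=
    le_ciInf (fun θ => by linarith [hkey θ θ.2])
  linarith
end

section
/- Let π be a target density on ℝ^d with respect to Lebesgue measure, h ∈ (0,∞), C a symmetric positive-definite d×d matrix, and μ : ℝ^d → ℝ^d arbitrary. For the Metropolis-Hastings chain with proposal distribution N(μ(θ), hC), the acceptance probability at any θ₀ with π(θ₀) > 0 satisfies A(θ₀) ≤ 1 / ( π(θ₀) (2πh)^{d/2} det(C)^{1/2} ). -/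
open MeasureTheory Matrix

/-- The Metropolis-Hastings acceptance function
`a_MH(θ,θ') = min(π(θ')q(θ',θ)/(π(θ)q(θ,θ')), 1)`, equal to `1` when `π(θ)q(θ,θ') = 0`. -/
noncomputable def mhAcceptFn {α : Type*} (pi : α → ℝ) (q : α → α → ℝ) (θ θ' : α) : ℝ :=
  if 0 < pi θ * q θ θ' then min ((pi θ' * q θ' θ) / (pi θ * q θ θ')) 1 else 1

/-- The Metropolis-Hastings acceptance probability `A(θ) = ∫ a_MH(θ,θ') q(θ,θ') dλ(θ')`. -/
noncomputable def mhAcceptProb {α : Type*} [MeasurableSpace α] (lam : Measure α)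
    (pi : α → ℝ) (q : α → α → ℝ) (θ : α) : ℝ :=
  ∫ θ', mhAcceptFn pi q θ θ' * q θ θ' ∂lam

/-- The Gaussian proposal density `q(θ,x)` of `N(μ(θ), hC)`:
`(2πh)^{−d/2} det(C)^{−1/2} exp(−(x−μ(θ))ᵀ(hC)⁻¹(x−μ(θ))/2)`. -/
noncomputable def gaussProposal {d : ℕ} (h : ℝ) (C : Matrix (Fin d) (Fin d) ℝ)
    (μ : (Fin d → ℝ) → (Fin d → ℝ)) (θ x : Fin d → ℝ) : ℝ :=
  (2 * Real.pi * h) ^ (-(d : ℝ) / 2) * C.det ^ (-(1 : ℝ) / 2) *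
    Real.exp (-(1 / (2 * h)) * ((x - μ θ) ⬝ᵥ (C⁻¹ *ᵥ (x - μ θ))))

lemma gaussProposal_pos {d : ℕ} {h : ℝ} (hh : 0 < h) {C : Matrix (Fin d) (Fin d) ℝ}
    (hC : C.PosDef) (μ : (Fin d → ℝ) → (Fin d → ℝ)) (θ x : Fin d → ℝ) :
    0 < gaussProposal h C μ θ x := by
  have h2πh : (0:ℝ) < 2 * Real.pi * h := by positivity
  exact mul_pos (mul_pos (Real.rpow_pos_of_pos h2πh _)
    (Real.rpow_pos_of_pos hC.det_pos _)) (Real.exp_pos _)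

lemma gaussProposal_le {d : ℕ} {h : ℝ} (hh : 0 < h) {C : Matrix (Fin d) (Fin d) ℝ}
    (hC : C.PosDef) (μ : (Fin d → ℝ) → (Fin d → ℝ)) (θ x : Fin d → ℝ) :
    gaussProposal h C μ θ x ≤
      (2 * Real.pi * h) ^ (-(d : ℝ) / 2) * C.det ^ (-(1 : ℝ) / 2) := by
  have h2πh : (0:ℝ) < 2 * Real.pi * h := by positivity
  have hK : 0 < (2 * Real.pi * h) ^ (-(d : ℝ) / 2) * C.det ^ (-(1 : ℝ) / 2) :=
    mul_pos (Real.rpow_pos_of_pos h2πh _) (Real.rpow_pos_of_pos hC.det_pos _)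
  have hQ : 0 ≤ (x - μ θ) ⬝ᵥ (C⁻¹ *ᵥ (x - μ θ)) := by
    have := hC.inv.posSemidef.dotProduct_mulVec_nonneg (x - μ θ)
    simpa using this
  have hexp : Real.exp (-(1 / (2 * h)) * ((x - μ θ) ⬝ᵥ (C⁻¹ *ᵥ (x - μ θ)))) ≤ 1 := by
    rw [Real.exp_le_one_iff]
    have : 0 ≤ (1 / (2 * h)) * ((x - μ θ) ⬝ᵥ (C⁻¹ *ᵥ (x - μ θ))) := by positivity
    nlinarith
  calc gaussProposal h C μ θ x
      ≤ (2 * Real.pi * h) ^ (-(d : ℝ) / 2) * C.det ^ (-(1 : ℝ) / 2) * 1 := by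
        unfold gaussProposal
        exact mul_le_mul_of_nonneg_left hexp hK.le
    _ = _ := mul_one _

/-- Proposition 5: for Metropolis-Hastings with proposal `N(μ(θ), hC)`, at any `θ₀` with
`π(θ₀) > 0`, `A(θ₀) ≤ 1/(π(θ₀)(2πh)^{d/2} det(C)^{1/2})`. -/
theorem mh_gaussian_proposal_accept_bound
    {d : ℕ} (hd : 0 < d) (h : ℝ) (hh : 0 < h)
    (C : Matrix (Fin d) (Fin d) ℝ) (hC : C.PosDef)
    (μ : (Fin d → ℝ) → (Fin d → ℝ))
    (pi : (Fin d → ℝ) → ℝ) (hpim : Measurable pi) (hpi0 : ∀ θ, 0 ≤ pi θ)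
    (hpi1 : ∫ θ, pi θ = 1)
    (θ₀ : Fin d → ℝ) (hθ₀ : 0 < pi θ₀) :
    mhAcceptProb volume pi (gaussProposal h C μ) θ₀ ≤
      1 / (pi θ₀ * (2 * Real.pi * h) ^ ((d : ℝ) / 2) * C.det ^ ((1 : ℝ) / 2)) := by
  set q := gaussProposal h C μ with hq
  set K : ℝ := (2 * Real.pi * h) ^ (-(d : ℝ) / 2) * C.det ^ (-(1 : ℝ) / 2) with hK
  have h2πh : (0:ℝ) < 2 * Real.pi * h := by positivity
  have hKpos : 0 < K := mul_pos (Real.rpow_pos_of_pos h2πh _)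
    (Real.rpow_pos_of_pos hC.det_pos _)
  have hpiInt : Integrable pi := by
    by_contra hni
    rw [integral_undef hni] at hpi1
    exact one_ne_zero hpi1.symm
  have hpt : ∀ θ', mhAcceptFn pi q θ₀ θ' * q θ₀ θ' ≤ K / pi θ₀ * pi θ' := by
    intro θ'
    have hq0 : 0 < q θ₀ θ' := gaussProposal_pos hh hC μ θ₀ θ'
    have hcond : 0 < pi θ₀ * q θ₀ θ' := mul_pos hθ₀ hq0
    rw [mhAcceptFn, if_pos hcond]
    have h1 : min ((pi θ' * q θ' θ₀) / (pi θ₀ * q θ₀ θ')) 1 * q θ₀ θ' ≤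
        (pi θ' * q θ' θ₀) / (pi θ₀ * q θ₀ θ') * q θ₀ θ' :=
      mul_le_mul_of_nonneg_right (min_le_left _ _) hq0.le
    have h2 : (pi θ' * q θ' θ₀) / (pi θ₀ * q θ₀ θ') * q θ₀ θ' =
        pi θ' * q θ' θ₀ / pi θ₀ := by
      field_simp
    have h3 : pi θ' * q θ' θ₀ / pi θ₀ ≤ K / pi θ₀ * pi θ' := by
      rw [div_mul_eq_mul_div, mul_comm K (pi θ')]
      gcongr
      · exact hpi0 θ'
      · exact gaussProposal_le hh hC μ θ' θ₀
    calc _ ≤ _ := h1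
      _ = _ := h2
      _ ≤ _ := h3
  have hnn : ∀ θ', 0 ≤ mhAcceptFn pi q θ₀ θ' * q θ₀ θ' := by
    intro θ'
    have hq0 : 0 < q θ₀ θ' := gaussProposal_pos hh hC μ θ₀ θ'
    apply mul_nonneg _ hq0.le
    rw [mhAcceptFn]
    split
    · exact le_min (div_nonneg (mul_nonneg (hpi0 _) (gaussProposal_pos hh hC μ _ _).le)
        (by positivity)) zero_le_one
    · exact zero_le_one
  have hgInt : Integrable (fun θ' => K / pi θ₀ * pi θ') := hpiInt.const_mul _
  have hint : mhAcceptProb volume pi q θ₀ ≤ ∫ θ', K / pi θ₀ * pi θ' := by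
    rw [mhAcceptProb]
    exact integral_mono_of_nonneg (Filter.Eventually.of_forall hnn) hgInt
      (Filter.Eventually.of_forall hpt)
  have hval : ∫ θ', K / pi θ₀ * pi θ' = K / pi θ₀ := by
    rw [integral_const_mul, hpi1, mul_one]
  rw [hval] at hint
  refine hint.trans_eq ?_
  rw [hK, show -(d : ℝ) / 2 = -((d:ℝ)/2) by ring, show -(1 : ℝ) / 2 = -((1:ℝ)/2) by ring,
    Real.rpow_neg h2πh.le, Real.rpow_neg hC.det_pos.le]
  have hA : ((2 * Real.pi * h) ^ ((d:ℝ) / 2)) ≠ 0 := (Real.rpow_pos_of_pos h2πh _).ne'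
  have hB : (C.det ^ ((1:ℝ) / 2)) ≠ 0 := (Real.rpow_pos_of_pos hC.det_pos _).ne'
  field_simp
end
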